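/- Let f : Ω → ℝ be symmetric (f(x) = f(−x)) on Ω = {-1,+1}^n, let P be the Glauber dynamics kernel of a symmetric measure μ (μ(x) = μ(−x)) and let P̂ be the corresponding restricted Glauber dynamics kernel on Ω^+ = {x : Σ_i x^i ≥ 0} with stationary measure μ^+. Then the principal solutions h and ĥ of the Poisson equations h − Ph = f − E_μ f and ĥ − P̂ĥ = f − E_{μ^+} f satisfy h(x) = ĥ(x) for x ∈ Ω^+ and h(x) = ĥ(−x) for x ∈ Ω∖Ω^+. In particular h is symmetric: h(x) = h(−x). -/

import Mathlib

open Finset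

/-- Spin value ±1 of a Boolean coordinate. -/
noncomputable def spin (b : Bool) : ℝ := if b then 1 else -1

/-- Configuration `x` with coordinate `i` set to `+1`. -/
noncomputable def up {n : ℕ} (x : Fin n → Bool) (i : Fin n) : Fin n → Bool :=
  Function.update x i true

/-- Configuration `x` with coordinate `i` set to `-1`. -/
noncomputable def dn {n : ℕ} (x : Fin n → Bool) (i : Fin n) : Fin n → Bool :=
  Function.update x i false

/-- Conditional probability `μ_i(1 | x^{(∼i)})`. -/
noncomputable def condProb {n : ℕ} (μ : (Fin n → Bool) → ℝ) (x : Fin n → Bool) (i : Fin n) : ℝ :=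
  μ (up x i) / (μ (up x i) + μ (dn x i))

/-- Glauber dynamics kernel of `μ`, acting on functions. -/
noncomputable def glauberOp {n : ℕ} (μ : (Fin n → Bool) → ℝ) (h : (Fin n → Bool) → ℝ)
    (x : Fin n → Bool) : ℝ :=
  (1 / n) * ∑ i, (condProb μ x i * h (up x i) + (1 - condProb μ x i) * h (dn x i))

/-- Discrete derivative `Δ_i(h)(x) = h(x^{(i,+)}) - h(x^{(i,-)})`. -/
noncomputable def disc {n : ℕ} (i : Fin n) (h : (Fin n → Bool) → ℝ) (x : Fin n → Bool) : ℝ :=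
  h (up x i) - h (dn x i)

/-- Expectation of `f` under the probability mass function `μ`. -/
noncomputable def expect {n : ℕ} (μ : (Fin n → Bool) → ℝ) (f : (Fin n → Bool) → ℝ) : ℝ :=
  ∑ x, μ x * f x

/-- Action of a Markov kernel on functions: `(Pf)(x) = Σ_y P(x,y) f(y)`. -/
noncomputable def act {n : ℕ} (P : (Fin n → Bool) → (Fin n → Bool) → ℝ)
    (f : (Fin n → Bool) → ℝ) (x : Fin n → Bool) : ℝ :=
  ∑ y, P x y * f y

/-- The Glauber dynamics transition kernel of `μ` as a transition matrix. -/
noncomputable def glauberK {n : ℕ} (μ : (Fin n → Bool) → ℝ) (x y : Fin n → Bool) : ℝ :=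
  (1 / n) * ∑ i, ((if y = up x i then condProb μ x i else 0)
    + (if y = dn x i then 1 - condProb μ x i else 0))

/-- Global spin flip. -/
noncomputable def flipc {n : ℕ} (x : Fin n → Bool) : Fin n → Bool := fun i => !x i

/-- Total magnetization `Σ_i x^i`. -/
noncomputable def mag {n : ℕ} (x : Fin n → Bool) : ℝ := ∑ i, spin (x i)

/-- The restricted (censored) Glauber kernel on `Ω⁺ = {x : Σ_i x^i ≥ 0}`:
take a Glauber step and flip all spins if the result leaves `Ω⁺`. -/
noncomputable def restrictedK {n : ℕ} (P : (Fin n → Bool) → (Fin n → Bool) → ℝ)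
    (x y : Fin n → Bool) : ℝ :=
  (if 0 ≤ mag y then P x y else 0) + (if ¬ 0 ≤ mag (flipc y) then P x (flipc y) else 0)

/-- The measure `μ⁺` on `Ω⁺` induced by a symmetric measure `μ`. -/
noncomputable def muPlus {n : ℕ} (μ : (Fin n → Bool) → ℝ) (x : Fin n → Bool) : ℝ :=
  if 0 < mag x then 2 * μ x else if mag x = 0 then μ x else 0

-- aux lemmas
lemma flipc_invol {n : ℕ} : Function.Involutive (flipc (n := n)) := by
  intro x; funext i; simp [flipc]

lemma up_flipc {n : ℕ} (x : Fin n → Bool) (i : Fin n) : up (flipc x) i = flipc (dn x i) := by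
  funext j
  simp only [up, dn, flipc, Function.update_apply]
  split <;> simp

lemma dn_flipc {n : ℕ} (x : Fin n → Bool) (i : Fin n) : dn (flipc x) i = flipc (up x i) := by
  funext j
  simp only [up, dn, flipc, Function.update_apply]
  split <;> simp

lemma spin_not (b : Bool) : spin (!b) = - spin b := by cases b <;> simp [spin]

lemma mag_flipc {n : ℕ} (x : Fin n → Bool) : mag (flipc x) = - mag x := by
  simp [mag, flipc, spin_not]

lemma condProb_flipc {n : ℕ} (μ : (Fin n → Bool) → ℝ) (hμpos : ∀ x, 0 < μ x)
    (hμsymm : ∀ x, μ x = μ (flipc x)) (x : Fin n → Bool) (i : Fin n) :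
    condProb μ (flipc x) i = 1 - condProb μ x i := by
  have hu := hμpos (up x i)
  have hd := hμpos (dn x i)
  rw [condProb, condProb, up_flipc, dn_flipc, ← hμsymm, ← hμsymm]
  have hne : μ (up x i) + μ (dn x i) ≠ 0 := by positivity
  have hne' : μ (dn x i) + μ (up x i) ≠ 0 := by positivity
  field_simp
  ring_nf

lemma act_glauberK {n : ℕ} (μ : (Fin n → Bool) → ℝ) (g : (Fin n → Bool) → ℝ)
    (x : Fin n → Bool) : act (glauberK μ) g x = glauberOp μ g x := by
  unfold act glauberK glauberOp
  simp only [mul_assoc, ← Finset.mul_sum]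
  congr 1
  simp only [Finset.sum_mul]
  rw [Finset.sum_comm]
  apply Finset.sum_congr rfl
  intro i _
  simp only [add_mul, ite_mul, zero_mul, Finset.sum_add_distrib,
    Finset.sum_ite_eq' Finset.univ, Finset.mem_univ, if_true]

lemma glauberOp_flipc {n : ℕ} (μ : (Fin n → Bool) → ℝ) (hμpos : ∀ x, 0 < μ x)
    (hμsymm : ∀ x, μ x = μ (flipc x)) (g : (Fin n → Bool) → ℝ)
    (hg : ∀ x, g x = g (flipc x)) (x : Fin n → Bool) :
    glauberOp μ g (flipc x) = glauberOp μ g x := by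
  unfold glauberOp
  congr 1
  apply Finset.sum_congr rfl
  intro i _
  rw [condProb_flipc μ hμpos hμsymm, up_flipc, dn_flipc, ← hg, ← hg]
  ring

lemma act_restrictedK {n : ℕ} (P : (Fin n → Bool) → (Fin n → Bool) → ℝ)
    (g : (Fin n → Bool) → ℝ) (hg : ∀ x, g x = g (flipc x)) (x : Fin n → Bool) :
    act (restrictedK P) g x = act P g x := by
  unfold act restrictedK
  simp only [add_mul, Finset.sum_add_distrib]
  have h2 : ∑ y, (if ¬ 0 ≤ mag (flipc y) then P x (flipc y) else 0) * g y
      = ∑ y, (if ¬ 0 ≤ mag y then P x y else 0) * g y := by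
    rw [← Fintype.sum_equiv (Function.Involutive.toPerm flipc flipc_invol)
      (fun y => (if ¬ 0 ≤ mag y then P x y else 0) * g y)
      (fun y => (if ¬ 0 ≤ mag (flipc y) then P x (flipc y) else 0) * g y)]
    intro y
    simp only [Function.Involutive.coe_toPerm]
    simp only [flipc_invol y]
    rw [← hg]
  rw [h2, ← Finset.sum_add_distrib]
  apply Finset.sum_congr rfl
  intro y _
  by_cases hy : 0 ≤ mag y <;> simp [hy]

lemma expect_muPlus {n : ℕ} (μ : (Fin n → Bool) → ℝ)
    (hμsymm : ∀ x, μ x = μ (flipc x)) (f : (Fin n → Bool) → ℝ)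
    (hfsymm : ∀ x, f x = f (flipc x)) :
    _root_.expect (muPlus μ) f = _root_.expect μ f := by
  unfold _root_.expect
  have hd : ∀ x : Fin n → Bool, muPlus μ (flipc x) - μ x = -(muPlus μ x - μ x) := by
    intro x
    unfold muPlus
    rw [mag_flipc, ← hμsymm x]
    rcases lt_trichotomy (mag x) 0 with hlt | heq | hgt
    · rw [if_pos (by linarith : (0:ℝ) < -mag x), if_neg (by linarith : ¬ (0:ℝ) < mag x),
        if_neg hlt.ne]
      ring
    · rw [if_neg (by rw [heq]; simp), if_pos (by rw [heq]; simp),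
        if_neg (by rw [heq]; simp), if_pos heq]
      ring
    · rw [if_neg (by linarith : ¬ (0:ℝ) < -mag x), if_neg (by linarith : ¬ -mag x = 0),
        if_pos hgt]
      ring
  have key : ∑ x, (muPlus μ x - μ x) * f x
      = ∑ x, -((muPlus μ x - μ x) * f x) := by
    apply Fintype.sum_equiv (Function.Involutive.toPerm flipc flipc_invol)
    intro x
    simp only [Function.Involutive.coe_toPerm]
    rw [← hfsymm, ← hμsymm, hd x]
    ring
  rw [Finset.sum_neg_distrib] at key
  have hz : ∑ x, (muPlus μ x - μ x) * f x = 0 := by linarith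
  have hz' : ∑ x, muPlus μ x * f x - ∑ x, μ x * f x = 0 := by
    rw [← Finset.sum_sub_distrib, ← hz]
    apply Finset.sum_congr rfl
    intro x _
    ring
  linarith

theorem stmt11 {n : ℕ} (hn : 0 < n) (μ : (Fin n → Bool) → ℝ)
    (hμpos : ∀ x, 0 < μ x) (hμsum : ∑ x, μ x = 1)
    (hμsymm : ∀ x, μ x = μ (flipc x))
    (f : (Fin n → Bool) → ℝ) (hfsymm : ∀ x, f x = f (flipc x))
    (h hhat : (Fin n → Bool) → ℝ)
    (hdef : h = fun x => ∑' t : ℕ, ((act (glauberK μ))^[t] f x - expect μ f))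
    (hhatdef : hhat = fun x =>
      ∑' t : ℕ, ((act (restrictedK (glauberK μ)))^[t] f x - expect (muPlus μ) f)) :
    (∀ x, 0 ≤ mag x → h x = hhat x) ∧
    (∀ x, ¬ 0 ≤ mag x → h x = hhat (flipc x)) ∧
    (∀ x, h x = h (flipc x)) := by
  have hsymm : ∀ (t : ℕ) (x : Fin n → Bool),
      (act (glauberK μ))^[t] f x = (act (glauberK μ))^[t] f (flipc x) := by
    intro t
    induction t with
    | zero => simpa using hfsymm
    | succ t ih =>
      intro x
      rw [Function.iterate_succ_apply', act_glauberK, act_glauberK]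
      exact (glauberOp_flipc μ hμpos hμsymm _ ih x).symm
  have hiter : ∀ t : ℕ,
      (act (restrictedK (glauberK μ)))^[t] f = (act (glauberK μ))^[t] f := by
    intro t
    induction t with
    | zero => rfl
    | succ t ih =>
      funext x
      rw [Function.iterate_succ_apply', Function.iterate_succ_apply', ih]
      exact act_restrictedK (glauberK μ) _ (hsymm t) x
  have hexp : _root_.expect (muPlus μ) f = _root_.expect μ f :=
    expect_muPlus μ hμsymm f hfsymm
  have hmain : hhat = h := by
    rw [hdef, hhatdef]
    funext x
    apply tsum_congr
    intro t
    rw [hiter t, hexp]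
  have hhsymm : ∀ x, h x = h (flipc x) := by
    intro x
    rw [hdef]
    exact tsum_congr fun t => by rw [hsymm t x]
  exact ⟨fun x _ => by rw [hmain], fun x _ => by rw [hmain]; exact hhsymm x, hhsymm⟩
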